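/- Under the pseudo-weight setup, for every interval I = [q,s] belonging to the geometric interval family 𝓘, the cumulative values satisfy Σ_{t=q}^{s} r_t(I) ≤ 5 · log₂(s + 1) · √|I|. -/

import Mathlib

open scoped BigOperators

/-- The geometric interval family `𝓘`, as a set of pairs `(q, s)` representing the
integer interval `[q, s]`: `(q,s) ∈ 𝓘` iff `q = i·2^k` and `s = (i+1)·2^k − 1` for
some `k ≥ 0` and `i ≥ 1`. -/
def geoSet : Set (ℕ × ℕ) :=
  {p | ∃ k i : ℕ, 1 ≤ i ∧ p.1 = i * 2 ^ k ∧ p.2 = (i + 1) * 2 ^ k - 1}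

/-- `η_I = min{1/2, 1/√|I|}` for the interval `I = [q,s]` (of size `s − q + 1`). -/
noncomputable def eta (p : ℕ × ℕ) : ℝ :=
  min (1 / 2) (1 / Real.sqrt ((p.2 - p.1 + 1 : ℕ) : ℝ))

/-- The pseudo-weights `w̃_t(I)` for `I = [q,s]`, given instantaneous regrets `r`:
`w̃_t(I) = 0` for `t < q`; `w̃_q(I) = 1`;
`w̃_t(I) = w̃_{t−1}(I)·(1 + η_I·r_{t−1}(I))` for `q < t ≤ s + 1`; and
`w̃_t(I) = w̃_{s+1}(I)` for `t > s + 1`.  (The indicator in the recursion below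
makes the last two cases coincide, since `t − 1 ∈ I` exactly when `q < t ≤ s + 1`.) -/
noncomputable def wtilde (r : ℕ → ℕ × ℕ → ℝ) (p : ℕ × ℕ) : ℕ → ℝ
  | 0 => if p.1 = 0 then 1 else 0
  | (t + 1) =>
    if t + 1 < p.1 then 0
    else if t + 1 = p.1 then 1
    else wtilde r p t * (1 + eta p * (if p.1 ≤ t ∧ t ≤ p.2 then r t p else 0))

/-- The weights `w_t(I) = η_I · w̃_t(I)` if `t ∈ I`, and `w_t(I) = 0` otherwise. -/
noncomputable def wfun (r : ℕ → ℕ × ℕ → ℝ) (p : ℕ × ℕ) (t : ℕ) : ℝ :=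
  if p.1 ≤ t ∧ t ≤ p.2 then eta p * wtilde r p t else 0

section Aux
open Finset
attribute [local instance] Classical.propDecidable

private lemma geo_facts {p : ℕ × ℕ} (hp : p ∈ geoSet) :
    1 ≤ p.1 ∧ p.1 ≤ p.2 ∧ p.2 + 1 ≤ 2 * p.1 := by
  obtain ⟨k, i, hi, h1, h2⟩ := hp
  have hk : 1 ≤ 2 ^ k := Nat.one_le_two_pow
  have hd : (i + 1) * 2 ^ k = i * 2 ^ k + 2 ^ k := by ring
  have h1' : 1 ≤ i * 2 ^ k := le_trans hk (Nat.le_mul_of_pos_left _ hi)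
  have h2i : i + 1 ≤ 2 * i := by omega
  have h2' : (i + 1) * 2 ^ k ≤ 2 * (i * 2 ^ k) := by
    calc (i + 1) * 2 ^ k ≤ 2 * i * 2 ^ k := Nat.mul_le_mul_right _ h2i
    _ = 2 * (i * 2 ^ k) := by ring
  omega

private lemma eta_pos (p : ℕ × ℕ) : 0 < eta p := by
  have h1 : (1 : ℝ) ≤ ((p.2 - p.1 + 1 : ℕ) : ℝ) := by exact_mod_cast Nat.le_add_left 1 _
  have : 0 < Real.sqrt ((p.2 - p.1 + 1 : ℕ) : ℝ) := Real.sqrt_pos.mpr (by linarith)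
  exact lt_min (by norm_num) (by positivity)

private lemma one_le_sqrt (p : ℕ × ℕ) : 1 ≤ Real.sqrt ((p.2 - p.1 + 1 : ℕ) : ℝ) := by
  have h1 : (1 : ℝ) ≤ ((p.2 - p.1 + 1 : ℕ) : ℝ) := by exact_mod_cast Nat.le_add_left 1 _
  have h2 := Real.sq_sqrt (by linarith : (0:ℝ) ≤ ((p.2 - p.1 + 1 : ℕ) : ℝ))
  nlinarith [Real.sqrt_nonneg ((p.2 - p.1 + 1 : ℕ) : ℝ)]

private lemma eta_le_half (p : ℕ × ℕ) : eta p ≤ 1 / 2 := min_le_left _ _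

variable (r : ℕ → ℕ × ℕ → ℝ)

private lemma wtilde_eq_zero {p : ℕ × ℕ} {t : ℕ} (ht : t < p.1) :
    wtilde r p t = 0 := by
  cases t with
  | zero => simp only [wtilde, if_neg (by omega : ¬ p.1 = 0)]
  | succ t => simp only [wtilde, if_pos ht]

private lemma fac_nonneg (hr : ∀ (t : ℕ) (p : ℕ × ℕ), p ∈ geoSet → -1 ≤ r t p ∧ r t p ≤ 1) {p : ℕ × ℕ} (hp : p ∈ geoSet) (t : ℕ) :
    0 ≤ 1 + eta p * (if p.1 ≤ t ∧ t ≤ p.2 then r t p else 0) := by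
  have h1 := eta_pos p
  have h2 := eta_le_half p
  by_cases h : p.1 ≤ t ∧ t ≤ p.2
  · rw [if_pos h]
    have := hr t p hp
    nlinarith [this.1, this.2]
  · rw [if_neg h]; simp

private lemma wtilde_nonneg (hr : ∀ (t : ℕ) (p : ℕ × ℕ), p ∈ geoSet → -1 ≤ r t p ∧ r t p ≤ 1) {p : ℕ × ℕ} (hp : p ∈ geoSet) (t : ℕ) :
    0 ≤ wtilde r p t := by
  induction t with
  | zero => simp only [wtilde]; split <;> norm_num
  | succ t ih =>
      simp only [wtilde]
      split
      · exact le_refl 0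
      · split
        · norm_num
        · exact mul_nonneg ih (fac_nonneg r hr hp t)


private lemma wtilde_succ {p : ℕ × ℕ} (hp1 : 1 ≤ p.1) (t : ℕ) :
    wtilde r p (t + 1) =
      wtilde r p t + (if p.1 = t + 1 then 1 else 0) + wfun r p t * r t p := by
  by_cases h1 : t + 1 < p.1
  · rw [show wtilde r p (t+1) = 0 by simp only [wtilde, if_pos h1]]
    rw [wtilde_eq_zero r (by omega : t < p.1), if_neg (by omega : ¬ p.1 = t + 1),
      wfun, if_neg (by omega : ¬ (p.1 ≤ t ∧ t ≤ p.2))]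
    ring
  · by_cases h2 : t + 1 = p.1
    · rw [show wtilde r p (t+1) = 1 by simp only [wtilde, if_neg h1, if_pos h2]]
      rw [wtilde_eq_zero r (by omega : t < p.1), if_pos (by omega : p.1 = t + 1),
        wfun, if_neg (by omega : ¬ (p.1 ≤ t ∧ t ≤ p.2))]
      ring
    · have hle : p.1 ≤ t := by omega
      rw [show wtilde r p (t+1) = wtilde r p t *
          (1 + eta p * (if p.1 ≤ t ∧ t ≤ p.2 then r t p else 0)) by
        simp only [wtilde, if_neg h1, if_neg h2]]
      rw [if_neg (by omega : ¬ p.1 = t + 1), wfun]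
      by_cases h3 : t ≤ p.2
      · rw [if_pos ⟨hle, h3⟩, if_pos ⟨hle, h3⟩]; ring
      · rw [if_neg (by tauto : ¬ (p.1 ≤ t ∧ t ≤ p.2)),
          if_neg (by tauto : ¬ (p.1 ≤ t ∧ t ≤ p.2))]; ring

private lemma wtilde_prod {q s : ℕ} (hq : 1 ≤ q) :
    ∀ j, q + j ≤ s + 1 →
      wtilde r (q, s) (q + j) = ∏ t ∈ Finset.Ico q (q + j), (1 + eta (q, s) * r t (q, s)) := by
  intro j
  induction j with
  | zero =>
      intro _
      obtain ⟨q', rfl⟩ : ∃ q', q = q' + 1 := ⟨q - 1, by omega⟩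
      simp [wtilde]
  | succ j ih =>
      intro hj
      have hj' : q + j ≤ s + 1 := by omega
      have h1 : ¬ (q + (j + 1) < q) := by omega
      have h2 : ¬ (q + (j + 1) = q) := by omega
      have h3 : q ≤ q + j ∧ q + j ≤ s := ⟨by omega, by omega⟩
      have : wtilde r (q, s) (q + (j + 1)) = wtilde r (q, s) (q + j) *
          (1 + eta (q, s) * r (q + j) (q, s)) := by
        rw [show q + (j + 1) = (q + j) + 1 from rfl]
        simp only [wtilde]
        rw [if_neg (by omega : ¬ (q + j + 1 < (q, s).1)),
          if_neg (by omega : ¬ (q + j + 1 = (q, s).1)), if_pos h3]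
      rw [this, ih hj', show q + (j + 1) = (q + j) + 1 from rfl,
        Finset.prod_Ico_succ_top (by omega : q ≤ q + j)]

private lemma exp_le_one_add {x : ℝ} (hx : -(1/2) ≤ x) :
    Real.exp (x - 2 * x ^ 2) ≤ 1 + x := by
  have h0 : (0:ℝ) < 1 - (x - 2 * x ^ 2) := by nlinarith [sq_nonneg x]
  have h1 := Real.add_one_le_exp (-(x - 2 * x ^ 2))
  have h2 : Real.exp (x - 2 * x ^ 2) * (1 - (x - 2 * x ^ 2)) ≤ 1 := by
    have h3 := mul_le_mul_of_nonneg_left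
      (by linarith : 1 - (x - 2 * x ^ 2) ≤ Real.exp (-(x - 2 * x ^ 2)))
      (Real.exp_pos (x - 2 * x ^ 2)).le
    rwa [← Real.exp_add, add_neg_cancel, Real.exp_zero] at h3
  have h4 : 0 ≤ x ^ 2 * (1 + 2 * x) := mul_nonneg (sq_nonneg x) (by linarith)
  nlinarith [Real.exp_pos (x - 2 * x ^ 2)]


private lemma exp_le_wtilde (hr : ∀ (t : ℕ) (p : ℕ × ℕ), p ∈ geoSet → -1 ≤ r t p ∧ r t p ≤ 1)
    {q s : ℕ} (hI : (q, s) ∈ geoSet) :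
    Real.exp (eta (q, s) * ∑ t ∈ Finset.Icc q s, r t (q, s)
        - 2 * eta (q, s) ^ 2 * ((s - q + 1 : ℕ) : ℝ))
      ≤ wtilde r (q, s) (s + 1) := by
  obtain ⟨hq1, hqs, -⟩ := geo_facts hI
  simp only at hq1 hqs
  have hprod := wtilde_prod r (s := s) hq1 (s + 1 - q) (by omega)
  rw [show q + (s + 1 - q) = s + 1 by omega] at hprod
  rw [hprod, Finset.Ico_add_one_right_eq_Icc]
  have hcard : (Finset.Icc q s).card = s - q + 1 := by rw [Nat.card_Icc]; omega
  have hsum : eta (q, s) * ∑ t ∈ Finset.Icc q s, r t (q, s)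
      - 2 * eta (q, s) ^ 2 * ((s - q + 1 : ℕ) : ℝ)
      = ∑ t ∈ Finset.Icc q s, (eta (q, s) * r t (q, s) - 2 * eta (q, s) ^ 2) := by
    rw [Finset.sum_sub_distrib, ← Finset.mul_sum, Finset.sum_const, hcard, nsmul_eq_mul]
    ring
  rw [hsum, Real.exp_sum]
  apply Finset.prod_le_prod (fun t _ => (Real.exp_pos _).le)
  intro t _
  have he := eta_pos (q, s)
  have heh := eta_le_half (q, s)
  have hrt := hr t (q, s) hI
  have hx : -(1/2) ≤ eta (q, s) * r t (q, s) := by nlinarith [hrt.1, hrt.2]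
  calc Real.exp (eta (q, s) * r t (q, s) - 2 * eta (q, s) ^ 2)
      ≤ Real.exp (eta (q, s) * r t (q, s) - 2 * (eta (q, s) * r t (q, s)) ^ 2) := by
        apply Real.exp_le_exp.mpr
        nlinarith [mul_nonneg (mul_nonneg he.le he.le)
          (mul_nonneg (by linarith [hrt.2] : (0:ℝ) ≤ 1 - r t (q, s))
            (by linarith [hrt.1] : (0:ℝ) ≤ 1 + r t (q, s)))]
    _ ≤ 1 + eta (q, s) * r t (q, s) := exp_le_one_add hx

private noncomputable def bigFin (t : ℕ) : Finset geoSet :=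
  (Finset.range (t + 1) ×ˢ Finset.range (2 * t + 1)).subtype (· ∈ geoSet)

private lemma mem_bigFin {t : ℕ} {b : geoSet} (h1 : (b : ℕ × ℕ).1 ≤ t) : b ∈ bigFin t := by
  obtain ⟨-, -, h3⟩ := geo_facts b.2
  simp only [bigFin, Finset.mem_subtype, Finset.mem_product, Finset.mem_range]
  omega

private lemma summable_aux {t : ℕ} {f : geoSet → ℝ}
    (hf : ∀ b : geoSet, f b ≠ 0 → (b : ℕ × ℕ).1 ≤ t) : Summable f :=
  summable_of_ne_finset_zero (s := bigFin t) fun b hb => by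
    by_contra h; exact hb (mem_bigFin (hf b h))

private lemma summable_wtilde (t : ℕ) :
    Summable (fun b : geoSet => wtilde r (b : ℕ × ℕ) t) :=
  summable_aux (t := t) fun b hb => by
    by_contra h
    exact hb (wtilde_eq_zero r (by omega))

private lemma summable_ind (t : ℕ) :
    Summable (fun b : geoSet => if (b : ℕ × ℕ).1 = t + 1 then (1:ℝ) else 0) :=
  summable_aux (t := t + 1) fun b hb => by
    by_contra h
    exact hb (if_neg (by omega))

private lemma summable_wr (t : ℕ) :
    Summable (fun b : geoSet => wfun r (b : ℕ × ℕ) t * r t (b : ℕ × ℕ)) :=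
  summable_aux (t := t) fun b hb => by
    by_contra h
    refine hb ?_
    rw [wfun, if_neg (fun hc => h hc.1), zero_mul]

private noncomputable def Phi (t : ℕ) : ℝ := ∑' b : geoSet, wtilde r (b : ℕ × ℕ) t

private lemma Phi_succ (t : ℕ) :
    Phi r (t + 1) = Phi r t
      + (∑' b : geoSet, if (b : ℕ × ℕ).1 = t + 1 then (1:ℝ) else 0)
      + ∑' b : geoSet, wfun r (b : ℕ × ℕ) t * r t (b : ℕ × ℕ) := by
  have hcong : (fun b : geoSet => wtilde r (b : ℕ × ℕ) (t + 1))
      = fun b : geoSet => (wtilde r (b : ℕ × ℕ) t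
          + (if (b : ℕ × ℕ).1 = t + 1 then (1:ℝ) else 0))
        + wfun r (b : ℕ × ℕ) t * r t (b : ℕ × ℕ) := by
    funext b
    rw [wtilde_succ r (geo_facts b.2).1 t]
  rw [Phi, hcong, Summable.tsum_add ((summable_wtilde r t).add (summable_ind t)) (summable_wr r t),
    Summable.tsum_add (summable_wtilde r t) (summable_ind t), Phi]


private lemma Phi_zero : Phi r 0 = 0 := by
  have : (fun b : geoSet => wtilde r (b : ℕ × ℕ) 0) = fun _ => 0 := by
    funext b
    exact wtilde_eq_zero r (by have := (geo_facts b.2).1; omega)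
  rw [Phi, this, tsum_zero]

private lemma Phi_eq (hbal : ∀ t : ℕ, 1 ≤ t →
      ∑' b : geoSet, wfun r (b : ℕ × ℕ) t * r t (b : ℕ × ℕ) = 0) (m : ℕ) :
    Phi r m = ∑ u ∈ Finset.range m,
      (∑' b : geoSet, if (b : ℕ × ℕ).1 = u + 1 then (1:ℝ) else 0) := by
  induction m with
  | zero => simpa using Phi_zero r
  | succ m ih =>
      have hB : (∑' b : geoSet, wfun r (b : ℕ × ℕ) m * r m (b : ℕ × ℕ)) = 0 := by
        rcases Nat.eq_zero_or_pos m with hm | hm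
        · subst hm
          have : (fun b : geoSet => wfun r (b : ℕ × ℕ) 0 * r 0 (b : ℕ × ℕ))
              = fun _ => 0 := by
            funext b
            rw [wfun, if_neg (by have := (geo_facts b.2).1; omega), zero_mul]
          rw [this, tsum_zero]
        · exact hbal m hm
      rw [Phi_succ r m, hB, ih, Finset.sum_range_succ, add_zero]

private lemma C_le {m u : ℕ} (hu : u < m) :
    (∑' b : geoSet, if (b : ℕ × ℕ).1 = u + 1 then (1:ℝ) else 0) ≤
      (((Finset.range (m + 1)).filter (fun k => 2 ^ k ∣ (u + 1))).card : ℝ) := by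
  set v := u + 1 with hv
  set Kv : Finset ℕ := (Finset.range (m + 1)).filter (fun k => 2 ^ k ∣ v) with hKv
  set Fv : Finset (ℕ × ℕ) := Kv.image (fun k => (v, v + 2 ^ k - 1)) with hFv
  set sv : Finset geoSet := Fv.subtype (· ∈ geoSet) with hsv
  have hzero : ∀ b : geoSet, b ∉ sv → (if (b : ℕ × ℕ).1 = u + 1 then (1:ℝ) else 0) = 0 := by
    intro b hb
    rw [if_neg]
    intro hb1
    apply hb
    obtain ⟨k, i, hi, h1, h2⟩ := b.2
    have hk1 : 1 ≤ 2 ^ k := Nat.one_le_two_pow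
    have hkv : 2 ^ k ∣ v := ⟨i, by show u + 1 = 2 ^ k * i; rw [← hb1, h1]; ring⟩
    have h2kv : 2 ^ k ≤ v := Nat.le_of_dvd (by omega) hkv
    have hkm : k < m + 1 := by have := @Nat.lt_two_pow_self k; omega
    have hmem : k ∈ Kv := Finset.mem_filter.mpr ⟨Finset.mem_range.mpr hkm, hkv⟩
    rw [Finset.mem_subtype]
    apply Finset.mem_image.mpr ⟨k, hmem, ?_⟩
    have hb2 : (b : ℕ × ℕ).2 = v + 2 ^ k - 1 := by
      rw [h2]
      have : (i + 1) * 2 ^ k = i * 2 ^ k + 2 ^ k := by ring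
      rw [this, ← h1, hb1]
    exact Prod.ext (by rw [hb1]) (by rw [hb2])
  rw [tsum_eq_sum hzero]
  calc (∑ b ∈ sv, if (b : ℕ × ℕ).1 = u + 1 then (1:ℝ) else 0)
      ≤ ∑ b ∈ sv, 1 := Finset.sum_le_sum (fun b _ => by split <;> norm_num)
    _ = (sv.card : ℝ) := by rw [Finset.sum_const, nsmul_eq_mul, mul_one]
    _ ≤ (Fv.card : ℝ) := by
        have := Finset.card_subtype (· ∈ geoSet) Fv
        have h2 := Finset.card_filter_le Fv (· ∈ geoSet)
        exact_mod_cast by rw [hsv]; omega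
    _ ≤ (Kv.card : ℝ) := by exact_mod_cast Finset.card_image_le

private lemma count_le (m : ℕ) :
    (∑ u ∈ Finset.range m,
      ((((Finset.range (m + 1)).filter (fun k => 2 ^ k ∣ (u + 1))).card : ℝ)))
      ≤ 2 * m := by
  have hswap : ∑ u ∈ Finset.range m,
      (((Finset.range (m + 1)).filter (fun k => 2 ^ k ∣ (u + 1))).card)
      = ∑ k ∈ Finset.range (m + 1), m / 2 ^ k := by
    have h1 : ∀ u, (((Finset.range (m + 1)).filter (fun k => 2 ^ k ∣ (u + 1))).card)
        = ∑ k ∈ Finset.range (m + 1), if 2 ^ k ∣ (u + 1) then 1 else 0 :=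
      fun u => Finset.card_filter _ _
    have h2 : ∀ k, (((Finset.range m).filter (fun u => 2 ^ k ∣ (u + 1))).card)
        = ∑ u ∈ Finset.range m, if 2 ^ k ∣ (u + 1) then 1 else 0 :=
      fun k => Finset.card_filter _ _
    simp_rw [h1]
    rw [Finset.sum_comm]
    simp_rw [← h2]
    exact Finset.sum_congr rfl fun k _ => Nat.card_multiples m (2 ^ k)
  calc (∑ u ∈ Finset.range m,
      ((((Finset.range (m + 1)).filter (fun k => 2 ^ k ∣ (u + 1))).card : ℝ)))
      = ((∑ k ∈ Finset.range (m + 1), m / 2 ^ k : ℕ) : ℝ) := by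
        rw [← hswap]; push_cast; rfl
    _ ≤ ∑ k ∈ Finset.range (m + 1), (m : ℝ) * (1 / 2) ^ k := by
        push_cast
        apply Finset.sum_le_sum
        intro k _
        calc ((m / 2 ^ k : ℕ) : ℝ) ≤ (m : ℝ) / (2 ^ k : ℕ) := Nat.cast_div_le
          _ = (m : ℝ) * (1 / 2) ^ k := by
            push_cast
            rw [div_eq_mul_inv, ← inv_pow]
            norm_num
    _ = (m : ℝ) * ∑ k ∈ Finset.range (m + 1), (1 / 2) ^ k := by rw [Finset.mul_sum]
    _ ≤ (m : ℝ) * 2 := by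
        apply mul_le_mul_of_nonneg_left (sum_geometric_two_le _) (by positivity)
    _ = 2 * m := by ring

private lemma Phi_le (hbal : ∀ t : ℕ, 1 ≤ t →
      ∑' b : geoSet, wfun r (b : ℕ × ℕ) t * r t (b : ℕ × ℕ) = 0) (m : ℕ) :
    Phi r m ≤ 2 * m := by
  rw [Phi_eq r hbal m]
  calc (∑ u ∈ Finset.range m,
        (∑' b : geoSet, if (b : ℕ × ℕ).1 = u + 1 then (1:ℝ) else 0))
      ≤ ∑ u ∈ Finset.range m,
        ((((Finset.range (m + 1)).filter (fun k => 2 ^ k ∣ (u + 1))).card : ℝ)) :=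
        Finset.sum_le_sum fun u hu => C_le (Finset.mem_range.mp hu)
    _ ≤ 2 * m := count_le m

end Aux

set_option maxHeartbeats 1000000 in
/-- Under the pseudo-weight setup (with `r_t(I) ∈ [−1,1]` and the balance condition
`Σ_{I ∈ 𝓘} w_t(I)·r_t(I) = 0`), for every interval `I = [q,s] ∈ 𝓘` we have
`Σ_{t=q}^{s} r_t(I) ≤ 5·log₂(s+1)·√|I|`. -/
theorem cumulative_regret_bound_on_geo_interval (r : ℕ → ℕ × ℕ → ℝ)
    (hr : ∀ (t : ℕ) (p : ℕ × ℕ), p ∈ geoSet → -1 ≤ r t p ∧ r t p ≤ 1)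
    (hbal : ∀ t : ℕ, 1 ≤ t → ∑' p : geoSet, wfun r (p : ℕ × ℕ) t * r t (p : ℕ × ℕ) = 0)
    (q s : ℕ) (hI : (q, s) ∈ geoSet) :
    ∑ t ∈ Finset.Icc q s, r t (q, s) ≤
      5 * Real.logb 2 ((s : ℝ) + 1) * Real.sqrt ((s - q + 1 : ℕ) : ℝ) := by

  obtain ⟨hq1, hqs, -⟩ := geo_facts hI
  simp only at hq1 hqs
  set n : ℕ := s - q + 1 with hn
  set a : ℝ := Real.sqrt ((n : ℕ) : ℝ) with ha
  set e : ℝ := eta (q, s) with he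
  set L : ℝ := Real.logb 2 ((s : ℝ) + 1) with hL
  set S : ℝ := ∑ t ∈ Finset.Icc q s, r t (q, s) with hS
  -- basic facts
  have hn1 : (1 : ℝ) ≤ (n : ℝ) := by exact_mod_cast Nat.le_add_left 1 _
  have ha1 : 1 ≤ a := one_le_sqrt (q, s)
  have hapos : 0 < a := by linarith
  have hna : (n : ℝ) = a ^ 2 := (Real.sq_sqrt (by linarith)).symm
  have hepos : 0 < e := eta_pos (q, s)
  have hehalf : e ≤ 1 / 2 := eta_le_half (q, s)
  have hea : e ≤ 1 / a := min_le_right _ _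
  have heinv : 1 / (2 * a) ≤ e := by
    apply le_min
    · rw [div_le_div_iff₀ (by positivity) (by norm_num)]
      linarith
    · rw [div_le_div_iff₀ (by positivity) hapos]
      linarith
  -- the chain of inequalities
  have h1 : Real.exp (e * S - 2 * e ^ 2 * (n : ℝ)) ≤ wtilde r (q, s) (s + 1) :=
    exp_le_wtilde r hr hI
  have h2 : wtilde r (q, s) (s + 1) ≤ Phi r (s + 1) :=
    Summable.le_tsum (summable_wtilde r (s + 1)) (⟨(q, s), hI⟩ : geoSet)
      (fun b _ => wtilde_nonneg r hr b.2 (s + 1))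
  have h3 : Phi r (s + 1) ≤ 2 * ((s : ℝ) + 1) := by
    have := Phi_le r hbal (s + 1)
    push_cast at this
    linarith
  have hlog : e * S - 2 * e ^ 2 * (n : ℝ) ≤ Real.log (2 * ((s : ℝ) + 1)) := by
    rw [Real.le_log_iff_exp_le (by positivity)]
    linarith
  -- log computations
  have hl2 : 0 < Real.log 2 := Real.log_pos (by norm_num)
  have hlogs : Real.log ((s : ℝ) + 1) = L * Real.log 2 := by
    rw [hL, Real.logb]
    field_simp
  have hlogmul : Real.log (2 * ((s : ℝ) + 1)) = Real.log 2 * (1 + L) := by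
    rw [Real.log_mul (by norm_num) (by positivity), hlogs]
    ring
  have hL1 : 1 ≤ L := by
    have hs2 : (2 : ℝ) ≤ (s : ℝ) + 1 := by
      have : 1 ≤ s := le_trans hq1 hqs
      exact_mod_cast Nat.succ_le_succ this
    have hlog2 : Real.log 2 ≤ Real.log ((s : ℝ) + 1) :=
      Real.log_le_log (by norm_num) hs2
    rw [hlogs] at hlog2
    nlinarith
  have hc : Real.log 2 < 0.6931471808 := Real.log_two_lt_d9
  -- solve for S
  have hM : e * S ≤ Real.log 2 * (1 + L) + 2 * e ^ 2 * (n : ℝ) := by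
    rw [← hlogmul]; linarith
  have hSle : S ≤ (Real.log 2 * (1 + L) + 2 * e ^ 2 * (n : ℝ)) / e :=
    (le_div_iff₀ hepos).mpr (by linarith [hM])
  have hdiv : (Real.log 2 * (1 + L) + 2 * e ^ 2 * (n : ℝ)) / e
      = Real.log 2 * (1 + L) * e⁻¹ + 2 * e * (n : ℝ) := by
    field_simp
  have hinv : e⁻¹ ≤ 2 * a := by
    rw [← one_div]
    calc 1 / e ≤ 1 / (1 / (2 * a)) := by
          apply one_div_le_one_div_of_le (by positivity) heinv
      _ = 2 * a := by field_simp
  have hen : e * (n : ℝ) ≤ a := by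
    calc e * (n : ℝ) ≤ (1 / a) * (n : ℝ) :=
          mul_le_mul_of_nonneg_right hea (by linarith)
      _ = a := by rw [hna]; field_simp
  have hbound : S ≤ Real.log 2 * (1 + L) * (2 * a) + 2 * a := by
    rw [hdiv] at hSle
    have t1 : Real.log 2 * (1 + L) * e⁻¹ ≤ Real.log 2 * (1 + L) * (2 * a) :=
      mul_le_mul_of_nonneg_left hinv (by nlinarith)
    linarith
  -- final arithmetic
  have hX : 0 ≤ 5 * L - 2 * Real.log 2 * (1 + L) - 2 := by
    nlinarith [mul_nonneg (sub_nonneg.mpr hL1) (by linarith : (0:ℝ) ≤ 5 - 2 * Real.log 2)]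
  have := mul_nonneg (by linarith : (0:ℝ) ≤ a) hX
  nlinarith [hbound]
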